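/- For t > 0 and x ∈ ℝ^d, the value |x|²/(2t) equals the supremum over all pairs (a,b) ∈ ℝ × ℝ^d with a + |b|²/2 ≤ 0 of the quantity a·t + b·x. In other words, Ψ(t,x) = sup{ a t + ⟨b,x⟩ : a + |b|²/2 ≤ 0 } for t > 0. -/
import Mathlib


open scoped RealInnerProductSpace

/-- Duality formula for the Benamou–Brenier integrand: for `t > 0`,
`|x|²/(2t) = sup { a t + ⟨b, x⟩ : a + |b|²/2 ≤ 0 }`. -/
theorem Psi_duality {d : ℕ} (t : ℝ) (ht : 0 < t) (x : EuclideanSpace ℝ (Fin d)) :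
    ‖x‖ ^ 2 / (2 * t) =
      sSup {y : ℝ | ∃ a : ℝ, ∃ b : EuclideanSpace ℝ (Fin d),
        a + ‖b‖ ^ 2 / 2 ≤ 0 ∧ y = a * t + ⟪b, x⟫} := by
  have hub : ∀ y ∈ {y : ℝ | ∃ a : ℝ, ∃ b : EuclideanSpace ℝ (Fin d),
      a + ‖b‖ ^ 2 / 2 ≤ 0 ∧ y = a * t + ⟪b, x⟫}, y ≤ ‖x‖ ^ 2 / (2 * t) := by
    rintro y ⟨a, b, hab, rfl⟩
    have h1 : ⟪b, x⟫ ≤ ‖b‖ * ‖x‖ := real_inner_le_norm b x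
    rw [le_div_iff₀ (by positivity)]
    nlinarith [sq_nonneg (‖x‖ - ‖b‖ * t), ht, mul_le_mul_of_nonneg_right hab ht.le,
      mul_le_mul_of_nonneg_right h1 (by positivity : (0:ℝ) ≤ 2 * t)]
  have hmem : ‖x‖ ^ 2 / (2 * t) ∈ {y : ℝ | ∃ a : ℝ, ∃ b : EuclideanSpace ℝ (Fin d),
      a + ‖b‖ ^ 2 / 2 ≤ 0 ∧ y = a * t + ⟪b, x⟫} := by
    refine ⟨-(‖(t⁻¹ • x : EuclideanSpace ℝ (Fin d))‖ ^ 2 / 2), t⁻¹ • x, by simp, ?_⟩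
    have hnorm : ‖(t⁻¹ • x : EuclideanSpace ℝ (Fin d))‖ = t⁻¹ * ‖x‖ := by
      rw [norm_smul, Real.norm_eq_abs, abs_of_pos (by positivity)]
    have hinner : ⟪(t⁻¹ • x : EuclideanSpace ℝ (Fin d)), x⟫ = t⁻¹ * ‖x‖ ^ 2 := by
      rw [real_inner_smul_left, real_inner_self_eq_norm_sq]
    rw [hnorm, hinner]
    field_simp
    ring
  exact le_antisymm (le_csSup ⟨_, hub⟩ hmem) (csSup_le ⟨_, hmem⟩ hub)
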